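/- arXiv:2509.10793 — 5 statements merged into one kernel-verified Lean document; each statement's English description precedes it below -/
import Mathlib

section
/- If f is a self-decomposable (commutative, associative) binary aggregation function and the sequence of updates of the aggregation network is applied to a vector of n = 2^ℓ values with all keys equal (a single group), then after the final round the last entry holds the fold of f over all n input values in order: G_{n-1} = f(x_0, f(x_1, …, f(x_{n-2}, x_{n-1})…)). -/
private def Fld {α : Type*} (f : α → α → α) (x : ℕ → α) (a b : ℕ) : α :=
  List.foldr f (x b) ((List.Ico a b).map x)

private lemma foldr_pull {α : Type*} (f : α → α → α)
    (hassoc : ∀ a b c, f (f a b) c = f a (f b c)) (c z : α) :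
    ∀ L : List α, List.foldr f (f c z) L = f (List.foldr f c L) z := by
  intro L; induction L with
  | nil => rfl
  | cons h t ih => simp only [List.foldr_cons, ih, hassoc]

private lemma Fld_split {α : Type*} (f : α → α → α)
    (hassoc : ∀ a b c, f (f a b) c = f a (f b c)) (x : ℕ → α)
    {a m b : ℕ} (ham : a ≤ m) (hmb : m < b) :
    Fld f x a b = f (Fld f x a m) (Fld f x (m + 1) b) := by
  unfold Fld
  rw [← List.Ico.append_consecutive (le_trans ham (Nat.le_succ m)) hmb,
    List.map_append, List.foldr_append, List.Ico.succ_top ham, List.map_append,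
    List.foldr_append]
  simp only [List.map_cons, List.map_nil, List.foldr_cons, List.foldr_nil]
  exact foldr_pull f hassoc _ _ _

private lemma aggnet_inv {α : Type*} (f : α → α → α)
    (hassoc : ∀ a b c, f (f a b) c = f a (f b c))
    (n : ℕ) (x : ℕ → α) :
    ∀ k, ∀ j, j < n →
      ((List.range k).foldl
          (fun G k => fun j => if 2 ^ k ≤ j ∧ j < n then f (G (j - 2 ^ k)) (G j) else G j)
          x) j = Fld f x (j - (2 ^ k - 1)) j := by
  intro k
  induction k with
  | zero =>
    intro j hj
    simp [Fld]
  | succ k ih =>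
    intro j hj
    rw [List.range_succ, List.foldl_append, List.foldl_cons, List.foldl_nil]
    have h2k : 1 ≤ 2 ^ k := Nat.one_le_two_pow
    have hpow : 2 ^ (k + 1) = 2 ^ k + 2 ^ k := by rw [pow_succ]; omega
    by_cases h : 2 ^ k ≤ j
    · simp only [h, hj, and_self, if_true]
      rw [ih j hj, ih (j - 2 ^ k) (by omega)]
      have h1 : j - 2 ^ k - (2 ^ k - 1) = j - (2 ^ (k + 1) - 1) := by omega
      have h2 : j - 2 ^ k + 1 = j - (2 ^ k - 1) := by omega
      rw [h1, ← h2, ← Fld_split f hassoc x (by omega) (by omega)]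
    · simp only [h, false_and, if_false]
      rw [ih j hj]
      have : j - (2 ^ k - 1) = j - (2 ^ (k + 1) - 1) := by omega
      rw [this]

/-- For a commutative, associative (self-decomposable) aggregation function `f`,
running the aggregation network (rounds with distance `d = 2^k`, each
simultaneously updating `G (j) ← f (G (j - d)) (G j)` for `d ≤ j < n`) on a
single group of `n = 2^ℓ` values leaves in the last entry the ordered fold
`f x₀ (f x₁ (… f x_{n-2} x_{n-1} …))`. -/
theorem aggnet_single_group_fold {α : Type*} (f : α → α → α)
    (hcomm : ∀ a b, f a b = f b a)
    (hassoc : ∀ a b c, f (f a b) c = f a (f b c))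
    (ℓ n : ℕ) (hn : n = 2 ^ ℓ) (x : ℕ → α) :
    ((List.range ℓ).foldl
        (fun G k => fun j => if 2 ^ k ≤ j ∧ j < n then f (G (j - 2 ^ k)) (G j) else G j)
        x) (n - 1)
      = List.foldr f (x (n - 1)) ((List.range (n - 1)).map x) := by
  have hpos : 0 < n := hn ▸ (Nat.pow_pos (by norm_num) : 0 < 2 ^ ℓ)
  rw [aggnet_inv f hassoc n x ℓ (n - 1) (by omega)]
  have : n - 1 - (2 ^ ℓ - 1) = 0 := by omega
  rw [this, Fld, List.Ico.zero_bot]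
end

section
/- In the aggregation network over a table of size n = 2^ℓ, values across distinct keys are never aggregated: if rows i and i+d have different keys, the update at distance d leaves G_{i+d} unchanged, so for every key group the final value at each row depends only on input values from rows with the same key. -/
/-- Values across distinct keys are never aggregated in the aggregation
network: (1) a single update at distance `d` leaves `G (i+d)` unchanged when
the keys of rows `i` and `i+d` differ; hence (2) if key groups are contiguous
(the table is sorted on the key column), the final value of the network at any
row `j` depends only on the input values at rows with the same key as `j`. -/
theorem aggnet_no_cross_key_aggregation {α κ : Type*} [DecidableEq κ]
    (f : α → α → α) (n : ℕ) (K : ℕ → κ)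
    -- the per-round simultaneous update of the aggregation network
    (step : (ℕ → α) → ℕ → (ℕ → α))
    (hstep : ∀ G d j, step G d j =
      if d ≤ j ∧ j < n ∧ K (j - d) = K j then f (G (j - d)) (G j) else G j)
    -- contiguity of key groups (table sorted on the key column)
    (hcontig : ∀ i j k : ℕ, i ≤ j → j ≤ k → K i = K k → K i = K j)
    (ℓ : ℕ) (hn : n = 2 ^ ℓ) :
    -- (1) an update across distinct keys leaves the value unchanged
    (∀ (G : ℕ → α) (d j : ℕ), d ≤ j → j < n → K (j - d) ≠ K j →
        step G d j = G j) ∧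
    -- (2) the final value at row j depends only on inputs from rows with key K j
    (∀ (x x' : ℕ → α), ∀ j < n,
        (∀ i, K i = K j → x i = x' i) →
        ((List.range ℓ).foldl (fun G k => step G (2 ^ k)) x) j
          = ((List.range ℓ).foldl (fun G k => step G (2 ^ k)) x') j) := by
  constructor
  · intro G d j hd hj hne
    rw [hstep, if_neg]
    exact fun h => hne h.2.2
  · suffices h : ∀ (L : List ℕ) (x x' : ℕ → α) (j : ℕ),
        (∀ i, K i = K j → x i = x' i) →
        (L.foldl (fun G k => step G (2 ^ k)) x) j
          = (L.foldl (fun G k => step G (2 ^ k)) x') j by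
      intro x x' j _ hxx'
      exact h _ x x' j hxx'
    intro L
    induction L with
    | nil => intro x x' j h; exact h j rfl
    | cons d L ih =>
      intro x x' j h
      simp only [List.foldl_cons]
      apply ih
      intro i hi
      rw [hstep, hstep]
      by_cases hc : 2 ^ d ≤ i ∧ i < n ∧ K (i - 2 ^ d) = K i
      · rw [if_pos hc, if_pos hc, h _ hi, h _ (hc.2.2.trans hi)]
      · rw [if_neg hc, if_neg hc]
        exact h i hi
end

section
/- Composing sorting permutations column by column correctly sorts a table lexicographically: if σ_k is a stable sorting permutation for column C_k, and for i = k−1 down to 1, σ_i is a stable sorting permutation for the column obtained by applying the composition π = σ_k ∘ σ_{k−1}' ∘ … (built right-to-left, each permutation extracted after applying the accumulated permutation to the next key column), then applying the final composed permutation to all columns sorts the table lexicographically on (C_1,…,C_k) with C_1 most significant. -/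
/-- `σ` is a stable sorting permutation for the vector `v` (the element at
position `i` moves to position `σ i`): the permuted vector `v ∘ σ⁻¹` is sorted,
and equal values keep their relative order. -/
def StableSortingPerm {n : ℕ} {α : Type*} [LinearOrder α]
    (v : Fin n → α) (σ : Equiv.Perm (Fin n)) : Prop :=
  Monotone (v ∘ σ.symm) ∧ ∀ i j : Fin n, v i = v j → i < j → σ i < σ j

/-- TableSort correctness: sorting key columns from the least significant `C (k-1)`
to the most significant `C 0`, each time extracting a stable sorting permutation
`σ i` for the copy of column `C i` permuted by the permutation `π i.succ`
accumulated so far and composing `π i.castSucc = σ i ∘ π i.succ`, yields a final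
permutation `π 0` that sorts the table lexicographically on `(C 0, …, C (k-1))`. -/
theorem tablesort_lexicographic {n k : ℕ} {α : Type*} [LinearOrder α]
    (C : Fin k → Fin n → α)
    (π : Fin (k + 1) → Equiv.Perm (Fin n))
    (σ : Fin k → Equiv.Perm (Fin n))
    (hlast : π (Fin.last k) = 1)
    (hsort : ∀ i : Fin k, StableSortingPerm ((C i) ∘ (π i.succ).symm) (σ i))
    (hcomp : ∀ i : Fin k, π i.castSucc = σ i * π i.succ) :
    Monotone (fun j : Fin n => toLex (fun i : Fin k => C i ((π 0).symm j))) := by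
  -- Auxiliary invariant, proved by downward induction on the column index.
  have key : ∀ m : Fin (k + 1), ∀ j1 j2 : Fin n, j1 < j2 →
      (∀ i : Fin k, (m : ℕ) ≤ i → C i ((π m).symm j1) = C i ((π m).symm j2)) ∨
      ∃ i : Fin k, (m : ℕ) ≤ i ∧ C i ((π m).symm j1) < C i ((π m).symm j2) ∧
        ∀ i' : Fin k, (m : ℕ) ≤ i' → i' < i →
          C i' ((π m).symm j1) = C i' ((π m).symm j2) := by
    intro m
    induction m using Fin.reverseInduction with
    | last =>
      intro j1 j2 _
      left
      intro i hi
      exact absurd (lt_of_le_of_lt hi i.isLt) (by simp)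
    | cast i ih =>
      intro j1 j2 hj
      have hrow : ∀ j, (π i.castSucc).symm j = (π i.succ).symm ((σ i).symm j) := by
        intro j; rw [hcomp i]; rfl
      obtain ⟨hmono, hstab⟩ := hsort i
      set a := (σ i).symm j1 with ha
      set b := (σ i).symm j2 with hb
      have hv : C i ((π i.succ).symm a) ≤ C i ((π i.succ).symm b) :=
        hmono (le_of_lt hj)
      rcases lt_or_eq_of_le hv with hlt | heq
      · right
        refine ⟨i, le_refl _, by rw [hrow, hrow]; exact hlt, ?_⟩
        intro i' h1 h2
        simp only [Fin.coe_castSucc] at h1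
        exact absurd h2 (by simp only [Fin.lt_def]; omega)
      · have hab : a < b := by
          rcases lt_trichotomy a b with h | h | h
          · exact h
          · exact absurd (by rw [ha, hb] at h; simpa using congrArg (σ i) h) (ne_of_lt hj)
          · have := hstab b a heq.symm h
            simp only [ha, hb, Equiv.apply_symm_apply] at this
            exact absurd this (not_lt.2 (le_of_lt hj))
        rcases ih a b hab with hcase | ⟨i'', hi''1, hi''2, hi''3⟩
        · left
          intro i' hi'
          rw [hrow, hrow]
          rcases eq_or_lt_of_le hi' with h | h
          · have : i' = i := Fin.ext (by simpa using h.symm)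
            rw [this]; exact heq
          · exact hcase i' (by simpa using h)
        · right
          simp only [Fin.val_succ] at hi''1
          refine ⟨i'', by simp only [Fin.coe_castSucc]; omega,
            by rw [hrow, hrow]; exact hi''2, ?_⟩
          intro i' h1 h2
          rw [hrow, hrow]
          rcases eq_or_lt_of_le h1 with h | h
          · have : i' = i := Fin.ext (by simpa using h.symm)
            rw [this]; exact heq
          · exact hi''3 i' (by simpa using h) h2
  intro j1 j2 hj
  rcases eq_or_lt_of_le hj with h | h
  · rw [h]
  · rcases key 0 j1 j2 h with hcase | ⟨i, _, hlt, hpre⟩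
    · have : (fun i : Fin k => C i ((π 0).symm j1)) =
          (fun i : Fin k => C i ((π 0).symm j2)) := by
        funext i; exact hcase i (Nat.zero_le _)
      simp only [this]; exact le_refl _
    · exact le_of_lt ⟨i, fun j hji => hpre j (Nat.zero_le _) hji, hlt⟩
end

section
/- Correctness of inner-join row validation: in the sorted concatenated table, setting each row's output validity to V ∧ ¬Distinct (where Distinct marks the first row of each (V, K)-group) and then propagating invalidation within (V, K, T_id)-groups yields exactly the following semantics: a valid right-table row remains valid if and only if there exists a valid left-table row with the same key, and every left-table row is invalidated. -/
/-- Correctness of the inner-join row validation. The concatenated table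
(`T = false` for left-table rows, `true` for right-table rows) is sorted
ascending on `(V, K, T_id)` and the left table has unique valid keys. Setting
each row's validity to `V ∧ ¬Distinct` (where `Distinct` marks the first row of
its `(V, K)`-group) and then propagating the first row's validity within each
`(V, K, T_id)`-group yields exactly inner-join semantics: every left-table row
is invalidated, and a row is finally valid iff it is a valid right-table row
whose key appears on some valid left-table row. -/
theorem inner_join_validation_correct {m : ℕ} {α : Type*} [LinearOrder α]
    (V : Fin m → Bool) (K : Fin m → α) (T : Fin m → Bool)
    (hsorted : Monotone (fun i : Fin m => toLex ((V i), toLex ((K i), (T i)))))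
    (huniq : ∀ i j : Fin m, T i = false → T j = false → V i = true → V j = true →
      K i = K j → i = j)
    -- Vout = V ∧ ¬Distinct(V, K)
    (Vout : Fin m → Bool)
    (hVout : ∀ i, Vout i = true ↔
      (V i = true ∧ ∃ j : Fin m, j < i ∧ V j = V i ∧ K j = K i))
    -- propagation: each row receives Vout of the first row of its (V,K,T)-group
    (final : Fin m → Bool)
    (hfinal : ∀ i j : Fin m, j ≤ i →
      (V j, K j, T j) = (V i, K i, T i) →
      (∀ l : Fin m, l < j → (V l, K l, T l) ≠ (V i, K i, T i)) →
      final i = Vout j) :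
    (∀ i : Fin m, T i = false → final i = false) ∧
    (∀ i : Fin m, final i = true ↔
      (T i = true ∧ V i = true ∧
        ∃ j : Fin m, T j = false ∧ V j = true ∧ K j = K i)) := by
  -- minimal representative of each (V,K,T)-group
  have hrep : ∀ i : Fin m, ∃ j, j ≤ i ∧ (V j, K j, T j) = (V i, K i, T i) ∧
      (∀ l, l < j → (V l, K l, T l) ≠ (V i, K i, T i)) := by
    intro i
    obtain ⟨j, hj, hjmin⟩ := Finset.exists_min_image
      (Finset.univ.filter fun j => (V j, K j, T j) = (V i, K i, T i)) id
      ⟨i, by simp⟩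
    simp only [Finset.mem_filter, Finset.mem_univ, true_and] at hj
    refine ⟨j, hjmin i (by simp), hj, ?_⟩
    intro l hl hlP
    exact absurd (hjmin l (Finset.mem_filter.mpr ⟨Finset.mem_univ l, hlP⟩)) (not_le.mpr hl)
  have hlt : ∀ a b : Fin m,
      (toLex ((V a), toLex ((K a), (T a))) < toLex ((V b), toLex ((K b), (T b)))) → a < b := by
    intro a b h
    by_contra hab
    exact absurd (hsorted (not_lt.mp hab)) (not_le.mpr h)
  have part1 : ∀ i : Fin m, T i = false → final i = false := by
    intro i hT
    obtain ⟨j, hji, htrip, hmin⟩ := hrep i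
    obtain ⟨hVji, hKji, hTji⟩ : V j = V i ∧ K j = K i ∧ T j = T i := by
      simpa [Prod.ext_iff] using htrip
    rw [hfinal i j hji htrip hmin]
    by_contra h
    obtain ⟨hVj, l, hlj, hVl, hKl⟩ := (hVout j).mp (by simpa using h)
    -- l < j with same (V,K), so T l ≤ T j = false by sortedness
    have hle := hsorted (le_of_lt hlj)
    rcases Prod.Lex.le_iff.mp hle with h1 | ⟨-, h2⟩
    · simp only at h1; rw [hVl] at h1; exact lt_irrefl _ h1
    · rcases Prod.Lex.le_iff.mp h2 with h3 | ⟨-, h4⟩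
      · simp only at h3; rw [hKl] at h3; exact lt_irrefl _ h3
      · simp only at h4
        have hTl : T l = false := by
          have : T j = false := hTji.trans hT
          rw [this] at h4
          exact le_antisymm h4 (Bool.false_le _)
        have : l = j := huniq l j hTl (hTji.trans hT) (hVl.trans hVj) hVj (hKl)
        exact absurd this (ne_of_lt hlj)
  refine ⟨part1, fun i => ⟨?_, ?_⟩⟩
  · intro hfin
    obtain ⟨j, hji, htrip, hmin⟩ := hrep i
    obtain ⟨hVji, hKji, hTji⟩ : V j = V i ∧ K j = K i ∧ T j = T i := by
      simpa [Prod.ext_iff] using htrip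
    have hVj : Vout j = true := (hfinal i j hji htrip hmin) ▸ hfin
    obtain ⟨hVjt, l, hlj, hVl, hKl⟩ := (hVout j).mp hVj
    have hTi : T i = true := by
      cases hTi : T i
      · rw [part1 i hTi] at hfin; exact absurd hfin (by simp)
      · rfl
    refine ⟨hTi, hVji ▸ hVjt, l, ?_, hVl.trans hVjt, hKl.trans hKji⟩
    -- T l must differ from T i = true since l < j is not in the group
    have hne := hmin l hlj
    cases hTl : T l
    · rfl
    · exfalso
      apply hne
      rw [Prod.ext_iff, Prod.ext_iff]
      exact ⟨hVl.trans hVji, hKl.trans hKji, hTl.trans hTi.symm⟩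
  · rintro ⟨hTi, hVi, j0, hTj0, hVj0, hKj0⟩
    obtain ⟨j, hji, htrip, hmin⟩ := hrep i
    obtain ⟨hVji, hKji, hTji⟩ : V j = V i ∧ K j = K i ∧ T j = T i := by
      simpa [Prod.ext_iff] using htrip
    rw [hfinal i j hji htrip hmin]
    apply (hVout j).mpr
    refine ⟨hVji.trans hVi, j0, ?_, hVj0.trans (hVji.trans hVi).symm, hKj0.trans hKji.symm⟩
    -- j0 < j since (V,K) agree but T j0 = false < true = T j
    apply hlt
    apply Prod.Lex.lt_iff.mpr
    right
    refine ⟨by simp [hVj0, hVji, hVi], ?_⟩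
    apply Prod.Lex.lt_iff.mpr
    right
    refine ⟨by simp [hKj0, hKji], ?_⟩
    show T j0 < T j
    rw [hTj0, hTji, hTi]
    exact Bool.false_lt_true
end

section
/- The anti-join L ▷_K R (all rows of L with no matching key in R) equals the complement of the semi-join within L: L ▷ R = L \ (L ⋉ R), and a row l ∈ L is retained by the anti-join validation rule (invalidate all R-rows, then copy the validity bit of the first row of each key group downward) if and only if no row of R shares its key. -/
/-- Anti-join correctness. (1) The anti-join `L ▷_K R` (rows of `L` with no
matching key in `R`) is the complement within `L` of the semi-join `L ⋉_K R`.
(2) In the concatenated table `R || L` sorted ascending on `(V, K, T_id)` (with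
`T_id = false` for `R`-rows and `true` for `L`-rows), the anti-join validation
rule — set `Vout ← V ∧ T_id` (invalidating all `R`-rows) and then copy the
validity of the first row of each `(V, K)`-group to all rows of the group —
retains an `L`-row iff it is valid and no valid `R`-row shares its key. -/
theorem anti_join_correct {ι κ κK : Type*} [DecidableEq ι] [DecidableEq κK]
    (L : Finset ι) (R : Finset κ) (keyL : ι → κK) (keyR : κ → κK)
    {m : ℕ} {α : Type*} [LinearOrder α]
    (V : Fin m → Bool) (K : Fin m → α) (T : Fin m → Bool)
    (hsorted : Monotone (fun i : Fin m => toLex ((V i), toLex ((K i), (T i)))))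
    -- Vout = V ∧ T_id : all R-rows are invalidated
    (Vout : Fin m → Bool)
    (hVout : ∀ i, Vout i = (V i && T i))
    -- propagation: each row receives Vout of the first row of its (V,K)-group
    (final : Fin m → Bool)
    (hfinal : ∀ i j : Fin m, j ≤ i →
      (V j, K j) = (V i, K i) →
      (∀ l : Fin m, l < j → (V l, K l) ≠ (V i, K i)) →
      final i = Vout j) :
    L.filter (fun l => ∀ r ∈ R, keyL l ≠ keyR r)
        = L \ L.filter (fun l => ∃ r ∈ R, keyL l = keyR r) ∧
    (∀ i : Fin m, T i = true →
      (final i = true ↔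
        (V i = true ∧ ¬∃ j : Fin m, T j = false ∧ V j = true ∧ K j = K i))) := by
  constructor
  · ext l
    simp only [Finset.mem_filter, Finset.mem_sdiff]
    push_neg
    tauto
  · intro i hTi
    -- find the minimal element of i's (V,K)-group
    have hex : ∃ n : ℕ, ∃ h : n < m, (V ⟨n, h⟩, K ⟨n, h⟩) = (V i, K i) :=
      ⟨i.1, i.isLt, rfl⟩
    classical
    obtain ⟨hlt, hPj⟩ := Nat.find_spec hex
    set n := Nat.find hex with hn
    set j : Fin m := ⟨n, hlt⟩ with hjdef
    have hji : j ≤ i := by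
      have h2 : Nat.find hex ≤ i.1 := Nat.find_le ⟨i.isLt, rfl⟩
      exact h2
    have hmin : ∀ l : Fin m, l < j → (V l, K l) ≠ (V i, K i) := by
      intro l hl hmem
      exact Nat.find_min hex hl ⟨l.isLt, by simpa using hmem⟩
    have hfi : final i = Vout j := hfinal i j hji hPj hmin
    have hVj : V j = V i := (Prod.mk.injEq _ _ _ _).mp hPj |>.1
    have hKj : K j = K i := (Prod.mk.injEq _ _ _ _).mp hPj |>.2
    rw [hfi, hVout j, hVj]
    constructor
    · intro h
      have hVi : V i = true := by
        cases hV : V i <;> simp [hV] at h ⊢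
      have hTj : T j = true := by
        cases hT : T j <;> simp [hVi, hT] at h ⊢
      refine ⟨hVi, ?_⟩
      rintro ⟨j', hTj', hVj', hKj'⟩
      have hjj' : j ≤ j' := by
        by_contra hc
        exact hmin j' (lt_of_not_ge hc) (by rw [hVj', hKj', hVi])
      have hmono := hsorted hjj'
      simp only at hmono
      rw [hVj', hKj', hTj', hVj, hKj, hTj, hVi] at hmono
      simp [Prod.Lex.le_iff] at hmono
      exact absurd hmono (by decide)
    · rintro ⟨hVi, hno⟩
      have hTj : T j = true := by
        cases hT : T j
        · exact absurd ⟨j, hT, hVj.trans hVi, hKj⟩ hno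
        · rfl
      simp [hVi, hTj]
end
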